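/- Let d ≡ 1 (mod 4) be a positive squarefree integer and ε_d = x + y√d the fundamental unit of Q(√d) with norm N(ε_d) = 1 (so x² − d y² = 1 with x, y positive rationals, here integers). Then x+1 is not a perfect square in ℕ and x−1 is not a perfect square in ℕ. -/

import Mathlib

/-- 2-adic valuation parity contradiction: if `a` and `m` are odd and `u ≠ 0`,
then `a * v² = 2 * u² * m` is impossible. -/
lemma stmt2_aux (a m u v : ℕ) (ha : Odd a) (hm : Odd m) (hu : u ≠ 0)
    (h : a * v ^ 2 = 2 * u ^ 2 * m) : False := by
  have hm0 : m ≠ 0 := by rintro rfl; simp at hm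
  have ha0 : a ≠ 0 := by rintro rfl; simp at ha
  have hv : v ≠ 0 := by
    rintro rfl
    simp at h
    rcases h with h | h | h <;> simp_all
  have hval := congrArg (padicValNat 2) h
  have h2 : Fact (Nat.Prime 2) := ⟨Nat.prime_two⟩
  have za : padicValNat 2 a = 0 :=
    padicValNat.eq_zero_of_not_dvd (by simpa [Nat.two_dvd_ne_zero, Nat.odd_iff] using ha)
  have zm : padicValNat 2 m = 0 :=
    padicValNat.eq_zero_of_not_dvd (by simpa [Nat.two_dvd_ne_zero, Nat.odd_iff] using hm)
  rw [padicValNat.mul ha0 (pow_ne_zero _ hv),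
      padicValNat.mul (by positivity) hm0,
      padicValNat.mul two_ne_zero (pow_ne_zero _ hu),
      padicValNat.pow v 2, padicValNat.pow u 2,
      padicValNat.self one_lt_two, za, zm] at hval
  omega

/-- Integer version, for `d` odd, `t ≠ 0`, `b ≠ 0`, `m` odd:
`d * b² = 2 * t² * m` is impossible. -/
lemma stmt2_aux_int (d t b m : ℤ) (hd : Odd d) (hm : Odd m) (ht : t ≠ 0)
    (h : d * b ^ 2 = 2 * t ^ 2 * m) : False := by
  apply stmt2_aux d.natAbs m.natAbs t.natAbs b.natAbs
  · exact Int.natAbs_odd.mpr hd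
  · exact Int.natAbs_odd.mpr hm
  · simpa using ht
  · have := congrArg Int.natAbs h
    simpa [Int.natAbs_mul, Int.natAbs_pow] using this

theorem stmt2 (d : ℤ) (hd : 0 < d) (hsf : Squarefree d) (hd4 : d % 4 = 1)
    (x y : ℤ) (hx : 0 < x) (hy : 0 < y) (hnorm : x ^ 2 - d * y ^ 2 = 1)
    (hfund : ∀ x' y' : ℤ, 0 < x' → 0 < y' → x' ^ 2 - d * y' ^ 2 = 1 → x ≤ x') :
    ¬ IsSquare (x + 1) ∧ ¬ IsSquare (x - 1) := by
  have hdodd : Odd d := by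
    rcases Int.even_or_odd d with ⟨k, rfl⟩ | h
    · omega
    · exact h
  -- x is odd and y is even
  rcases Int.even_or_odd x with ⟨a, rfl⟩ | ⟨a, rfl⟩
  · -- x even: impossible
    exfalso
    rcases Int.even_or_odd y with ⟨b, rfl⟩ | ⟨b, rfl⟩
    · have h4 : (4 : ℤ) ∣ 1 := ⟨a ^ 2 - d * b ^ 2, by linear_combination -hnorm⟩
      norm_num at h4
    · have h4 : (4 : ℤ) ∣ (d + 1) :=
        ⟨a ^ 2 - d * b ^ 2 - d * b, by linear_combination -hnorm⟩
      obtain ⟨k, hk⟩ := h4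
      omega
  · rcases Int.even_or_odd y with ⟨b, rfl⟩ | ⟨b, rfl⟩
    · -- x odd, y even: the main case
      constructor
      · rintro ⟨s, hs⟩
        -- hs : 2*a+1+1 = s*s, so s even
        obtain ⟨t, rfl⟩ : Even s := by
          rcases Int.even_or_odd s with h | ⟨c, rfl⟩
          · exact h
          · exfalso
            have := hs
            have e : (2 * c + 1) * (2 * c + 1) = 2 * (2 * c ^ 2 + 2 * c) + 1 := by ring
            omega
        have hat : a = 2 * t ^ 2 - 1 := by
          have e : (t + t) * (t + t) = 4 * t ^ 2 := by ring
          linarith [hs]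
        subst hat
        have ht : t ≠ 0 := by rintro rfl; norm_num at hx
        have key : d * b ^ 2 = 2 * t ^ 2 * (2 * t ^ 2 - 1) := by
          have h4 : 4 * (d * b ^ 2) = 4 * (2 * t ^ 2 * (2 * t ^ 2 - 1)) := by
            linear_combination -hnorm
          linarith
        exact stmt2_aux_int d t b (2 * t ^ 2 - 1) hdodd ⟨t ^ 2 - 1, by ring⟩ ht key
      · rintro ⟨s, hs⟩
        obtain ⟨t, rfl⟩ : Even s := by
          rcases Int.even_or_odd s with h | ⟨c, rfl⟩
          · exact h
          · exfalso
            have := hs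
            have e : (2 * c + 1) * (2 * c + 1) = 2 * (2 * c ^ 2 + 2 * c) + 1 := by ring
            omega
        have hat : a = 2 * t ^ 2 := by
          have e : (t + t) * (t + t) = 4 * t ^ 2 := by ring
          linarith [hs]
        subst hat
        have ht : t ≠ 0 := by
          rintro rfl
          norm_num at hnorm
          rcases hnorm with h | h
          · omega
          · omega
        have key : d * b ^ 2 = 2 * t ^ 2 * (2 * t ^ 2 + 1) := by
          have h4 : 4 * (d * b ^ 2) = 4 * (2 * t ^ 2 * (2 * t ^ 2 + 1)) := by
            linear_combination -hnorm
          linarith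
        exact stmt2_aux_int d t b (2 * t ^ 2 + 1) hdodd ⟨t ^ 2, by ring⟩ ht key
    · -- x odd, y odd: impossible
      exfalso
      have h4 : (4 : ℤ) ∣ d :=
        ⟨a ^ 2 + a - d * b ^ 2 - d * b, by linear_combination -hnorm⟩
      obtain ⟨k, hk⟩ := h4
      omega
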